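/- Every treeable countable Borel equivalence relation decomposes as a free product of an at most countable family of finite Borel subrelations. In particular, every hyperfinite countable Borel equivalence relation is a free product of finite Borel equivalence relations. -/

import Mathlib

open MeasureTheory

/-- A countable Borel equivalence relation on `X`, defined on a Borel domain `dom`:
it is Borel as a subset of `X × X`, is an equivalence relation on `dom`, and has
countable classes. -/
structure CBER (X : Type) [MeasurableSpace X] where
  dom : Set X
  dom_meas : MeasurableSet dom
  rel : X → X → Prop
  rel_meas : MeasurableSet {p : X × X | rel p.1 p.2}
  rel_dom : ∀ {x y : X}, rel x y → x ∈ dom ∧ y ∈ dom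
  refl : ∀ x ∈ dom, rel x x
  symm : ∀ {x y : X}, rel x y → rel y x
  trans : ∀ {x y z : X}, rel x y → rel y z → rel x z
  countable_classes : ∀ x : X, {y | rel x y}.Countable

/-- The class of `x`. -/
def CBER.cls {X : Type} [MeasurableSpace X] (R : CBER X) (x : X) : Set X := {y | R.rel x y}

/-- The `R`-saturation of a set `A`: the union of the `R`-classes meeting `A`. -/
def CBER.sat {X : Type} [MeasurableSpace X] (R : CBER X) (A : Set X) : Set X :=
  {y | ∃ x ∈ A, R.rel x y}

/-- A complete section: a Borel subset of the domain meeting every class. -/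
def CBER.IsCompleteSection {X : Type} [MeasurableSpace X] (R : CBER X) (A : Set X) : Prop :=
  MeasurableSet A ∧ A ⊆ R.dom ∧ ∀ x ∈ R.dom, ∃ y ∈ A, R.rel x y

/-- A smooth CBER: one admitting a Borel fundamental domain (a Borel set meeting
every class exactly once). -/
def CBER.Smooth {X : Type} [MeasurableSpace X] (R : CBER X) : Prop :=
  ∃ D : Set X, MeasurableSet D ∧ D ⊆ R.dom ∧ ∀ x ∈ R.dom, ∃! y, y ∈ D ∧ R.rel x y

/-- Smoothness of the restriction `R|A`. -/
def CBER.SmoothOn {X : Type} [MeasurableSpace X] (R : CBER X) (A : Set X) : Prop :=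
  ∃ D : Set X, MeasurableSet D ∧ D ⊆ A ∧ ∀ x ∈ R.dom ∩ A, ∃! y, y ∈ D ∧ R.rel x y

/-- All classes are finite. -/
def CBER.FiniteClasses {X : Type} [MeasurableSpace X] (R : CBER X) : Prop :=
  ∀ x ∈ R.dom, (R.cls x).Finite

/-- Aperiodic: all classes are infinite (on the domain). -/
def CBER.Aperiodic {X : Type} [MeasurableSpace X] (R : CBER X) : Prop :=
  ∀ x ∈ R.dom, (R.cls x).Infinite

/-- Trivial: all classes are singletons. -/
def CBER.TrivialClasses {X : Type} [MeasurableSpace X] (R : CBER X) : Prop :=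
  ∀ x y, R.rel x y → x = y

/-- The restriction `R|U` of `R` to a Borel set `U`. -/
def CBER.restrict {X : Type} [MeasurableSpace X] (R : CBER X) (U : Set X)
    (hU : MeasurableSet U) : CBER X where
  dom := R.dom ∩ U
  dom_meas := R.dom_meas.inter hU
  rel x y := R.rel x y ∧ x ∈ U ∧ y ∈ U
  rel_meas := by
    have h : {p : X × X | R.rel p.1 p.2 ∧ p.1 ∈ U ∧ p.2 ∈ U} =
        {p : X × X | R.rel p.1 p.2} ∩ (Prod.fst ⁻¹' U ∩ Prod.snd ⁻¹' U) := by
      ext p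
      simp only [Set.mem_setOf_eq, Set.mem_inter_iff, Set.mem_preimage, and_assoc]
    rw [h]
    exact R.rel_meas.inter ((measurable_fst hU).inter (measurable_snd hU))
  rel_dom := fun h => ⟨⟨(R.rel_dom h.1).1, h.2.1⟩, ⟨(R.rel_dom h.1).2, h.2.2⟩⟩
  refl := fun x hx => ⟨R.refl x hx.1, hx.2, hx.2⟩
  symm := fun h => ⟨R.symm h.1, h.2.2, h.2.1⟩
  trans := fun h h' => ⟨R.trans h.1 h'.1, h.2.1, h'.2.2⟩
  countable_classes := fun x =>
    Set.Countable.mono (fun y hy => hy.1) (R.countable_classes x)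

/-- `S` is a subrelation of `R`. -/
def CBER.IsSubrelOf {X : Type} [MeasurableSpace X] (S R : CBER X) : Prop :=
  S.dom ⊆ R.dom ∧ ∀ x y, S.rel x y → R.rel x y

/-- A partial Borel isomorphism between Borel subsets `src` and `tgt` of `X`. -/
structure PBI (X : Type) [MeasurableSpace X] where
  src : Set X
  tgt : Set X
  src_meas : MeasurableSet src
  tgt_meas : MeasurableSet tgt
  toFun : X → X
  invFun : X → X
  meas_toFun : Measurable toFun
  meas_invFun : Measurable invFun
  mapsTo : Set.MapsTo toFun src tgt
  mapsTo_inv : Set.MapsTo invFun tgt src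
  left_inv : ∀ x ∈ src, invFun (toFun x) = x
  right_inv : ∀ y ∈ tgt, toFun (invFun y) = y

/-- Membership in the full pseudogroup `[[R]]`: a partial Borel isomorphism whose
graph is contained in `R`. -/
def CBER.InPseudogroup {X : Type} [MeasurableSpace X] (R : CBER X) (φ : PBI X) : Prop :=
  φ.src ⊆ R.dom ∧ ∀ x ∈ φ.src, R.rel x (φ.toFun x)

/-- Two subrelations `S₁`, `S₂` of `R` are inner conjugate in `R` if some element of the
full pseudogroup of `R` with domain `D(S₂)` and target `D(S₁)` conjugates one to the other. -/
def InnerConjugate {X : Type} [MeasurableSpace X] (R S₁ S₂ : CBER X) : Prop :=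
  ∃ φ : PBI X, R.InPseudogroup φ ∧ φ.src = S₂.dom ∧ φ.tgt = S₁.dom ∧
    ∀ x ∈ φ.src, ∀ y ∈ φ.src, (S₂.rel x y ↔ S₁.rel (φ.toFun x) (φ.toFun y))

/-- `R` preserves the measure `μ`: every element of its full pseudogroup preserves `μ`. -/
def CBER.IsPMP {X : Type} [MeasurableSpace X] (R : CBER X) (μ : Measure X) : Prop :=
  ∀ φ : PBI X, R.InPseudogroup φ → ∀ A : Set X, A ⊆ φ.src → MeasurableSet A →
    μ (φ.toFun '' A) = μ A

/-- Free independence of a family of equivalence relations: any cycle alternating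
nontrivially among the factors must have two consecutive steps in the same factor. -/
def FreelyIndep {X : Type} [MeasurableSpace X] {ι : Type} (Rf : ι → CBER X) : Prop :=
  ∀ (n : ℕ) (x : ℕ → X) (i : ℕ → ι), 2 ≤ n → x n = x 0 →
    (∀ j < n, x j ≠ x (j + 1)) → (∀ j < n, (Rf (i j)).rel (x j) (x (j + 1))) →
    ∃ j, j + 1 < n ∧ i j = i (j + 1)

/-- `R` is the free product of the family `Rf`: the family is freely independent and `R`
is the smallest equivalence relation on the union of the domains containing every `Rf i`. -/
def IsFreeProduct {X : Type} [MeasurableSpace X] {ι : Type} (R : CBER X)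
    (Rf : ι → CBER X) : Prop :=
  FreelyIndep Rf ∧ R.dom = (⋃ i, (Rf i).dom) ∧
    ∀ x y, R.rel x y ↔
      (x ∈ R.dom ∧ Relation.EqvGen (fun a b => ∃ i, (Rf i).rel a b) x y)

/-- The partition `U = ⊔ⱼ Uⱼ` trivializes the free product decomposition `R = *ⱼ Rf j`:
`U` is a complete section for `R`, the partition is `R|U`-invariant, and
`R|Uⱼ = (Rf j)|Uⱼ` for every `j`. -/
def Trivializes {X : Type} [MeasurableSpace X] {ι : Type}
    (R : CBER X) (Rf : ι → CBER X) (U : ι → Set X) : Prop :=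
  (∀ j, MeasurableSet (U j)) ∧ (∀ j, U j ⊆ R.dom) ∧
  Pairwise (Function.onFun Disjoint U) ∧
  (∀ x ∈ R.dom, ∃ y ∈ ⋃ j, U j, R.rel x y) ∧
  (∀ i j : ι, ∀ x ∈ U i, ∀ y ∈ U j, R.rel x y → i = j) ∧
  (∀ j, ∀ x ∈ U j, ∀ y ∈ U j, (R.rel x y ↔ (Rf j).rel x y))

/-- A free product decomposition is inessential if it admits a trivialization. -/
def Inessential {X : Type} [MeasurableSpace X] {ι : Type}
    (R : CBER X) (Rf : ι → CBER X) : Prop :=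
  ∃ U : ι → Set X, Trivializes R Rf U

/-- Freely indecomposable (Borel context): every free product decomposition is inessential. -/
def FreelyIndecomposable {X : Type} [MeasurableSpace X] (R : CBER X) : Prop :=
  ∀ (ι : Type) (_ : Countable ι) (Rf : ι → CBER X), IsFreeProduct R Rf → Inessential R Rf

/-- Inessential decomposition in the measured context: a trivialization up to `μ`-null sets. -/
def InessentialMod {X : Type} [MeasurableSpace X] (μ : Measure X) {ι : Type}
    (R : CBER X) (Rf : ι → CBER X) : Prop :=
  ∃ (U : ι → Set X) (C : Set X),
    (∀ j, MeasurableSet (U j)) ∧ (∀ j, U j ⊆ R.dom) ∧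
    Pairwise (Function.onFun Disjoint U) ∧
    MeasurableSet C ∧ μ Cᶜ = 0 ∧
    (∀ x ∈ R.dom ∩ C, ∃ y ∈ ⋃ j, U j, R.rel x y) ∧
    (∀ i j : ι, ∀ x ∈ U i ∩ C, ∀ y ∈ U j ∩ C, R.rel x y → i = j) ∧
    (∀ j, ∀ x ∈ U j ∩ C, ∀ y ∈ U j ∩ C, (R.rel x y ↔ (Rf j).rel x y))

/-- Freely indecomposable (measured context): every free product decomposition is
inessential up to `μ`-null sets. -/
def FreelyIndecomposableMod {X : Type} [MeasurableSpace X] (μ : Measure X)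
    (R : CBER X) : Prop :=
  ∀ (ι : Type) (_ : Countable ι) (Rf : ι → CBER X), IsFreeProduct R Rf →
    InessentialMod μ R Rf

/-- One step of a word in a graphing: apply `φ` (if `e = true`) or `φ⁻¹` (if `e = false`). -/
def PBIStep {X : Type} [MeasurableSpace X] (φ : PBI X) : Bool → X → X → Prop
  | true, a, b => a ∈ φ.src ∧ φ.toFun a = b
  | false, a, b => a ∈ φ.tgt ∧ φ.invFun a = b

/-- A treeing: any cyclic word in the generators and their inverses admits a reduction. -/
def IsTreeing {X : Type} [MeasurableSpace X] {ι : Type} (Φ : ι → PBI X) : Prop :=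
  ∀ (n : ℕ) (i : ℕ → ι) (ε : ℕ → Bool) (x : ℕ → X),
    0 < n → x n = x 0 → (∀ j < n, PBIStep (Φ (i j)) (ε j) (x j) (x (j + 1))) →
    ∃ j, j + 1 < n ∧ i j = i (j + 1) ∧ ε j ≠ ε (j + 1)

/-- The graphing `Φ` generates `R`: `R` is the smallest equivalence relation on the union of
the sources and targets containing the graphs of the `Φ i`. -/
def GeneratesCBER {X : Type} [MeasurableSpace X] {ι : Type} (Φ : ι → PBI X)
    (R : CBER X) : Prop :=
  R.dom = (⋃ i, ((Φ i).src ∪ (Φ i).tgt)) ∧ (∀ i, R.InPseudogroup (Φ i)) ∧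
    ∀ x y, R.rel x y ↔ (x ∈ R.dom ∧
      Relation.EqvGen (fun a b => ∃ i, a ∈ (Φ i).src ∧ (Φ i).toFun a = b) x y)

/-- Treeable: generated by some (countable) treeing. -/
def CBER.Treeable {X : Type} [MeasurableSpace X] (R : CBER X) : Prop :=
  ∃ Φ : ℕ → PBI X, IsTreeing Φ ∧ GeneratesCBER Φ R

/-- Hyperfinite: increasing union of finite Borel subrelations. -/
def CBER.Hyperfinite {X : Type} [MeasurableSpace X] (R : CBER X) : Prop :=
  ∃ S : ℕ → CBER X, (∀ n, (S n).IsSubrelOf R) ∧ (∀ n, (S n).FiniteClasses) ∧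
    (∀ n, (S n).dom = R.dom) ∧ (∀ n, ∀ x y, (S n).rel x y → (S (n + 1)).rel x y) ∧
    ∀ x y, R.rel x y → ∃ n, (S n).rel x y

/-- Ergodicity of a measured CBER: every invariant Borel set is null or conull. -/
def ErgodicCBER {X : Type} [MeasurableSpace X] (R : CBER X) (μ : Measure X) : Prop :=
  ∀ A : Set X, MeasurableSet A → (∀ x ∈ A, ∀ y, R.rel x y → y ∈ A) →
    μ A = 0 ∨ μ Aᶜ = 0

/-- A stable orbit equivalence between measured CBERs: a Borel isomorphism between
complete sections (mod null sets), sending the normalized measure to the normalized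
measure, and preserving the relations a.e. -/
structure SOEquiv {X Y : Type} [MeasurableSpace X] [MeasurableSpace Y]
    (R : CBER X) (μ : Measure X) (S : CBER Y) (ν : Measure Y) where
  A : Set X
  B : Set Y
  toFun : X → Y
  invFun : Y → X
  measA : MeasurableSet A
  measB : MeasurableSet B
  A_sub : A ⊆ R.dom
  B_sub : B ⊆ S.dom
  A_pos : 0 < μ A
  B_pos : 0 < ν B
  A_section : ∀ᵐ x ∂μ, x ∈ R.dom → ∃ y ∈ A, R.rel x y
  B_section : ∀ᵐ y ∂ν, y ∈ S.dom → ∃ z ∈ B, S.rel y z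
  meas_toFun : Measurable toFun
  meas_invFun : Measurable invFun
  mapsTo : Set.MapsTo toFun A B
  mapsTo_inv : Set.MapsTo invFun B A
  left_inv : ∀ x ∈ A, invFun (toFun x) = x
  right_inv : ∀ y ∈ B, toFun (invFun y) = y
  measure_eq : ∀ E : Set X, E ⊆ A → MeasurableSet E →
    (μ A)⁻¹ * μ E = (ν B)⁻¹ * ν (toFun '' E)
  rel_iff : ∃ C : Set X, MeasurableSet C ∧ μ (A \ C) = 0 ∧
    ∀ x ∈ A ∩ C, ∀ y ∈ A ∩ C, (R.rel x y ↔ S.rel (toFun x) (toFun y))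

/-- Stable orbit equivalence. -/
def SOE {X Y : Type} [MeasurableSpace X] [MeasurableSpace Y]
    (R : CBER X) (μ : Measure X) (S : CBER Y) (ν : Measure Y) : Prop :=
  Nonempty (SOEquiv R μ S ν)

/-- Orbit equivalence: a stable orbit equivalence where one can take the complete
sections to be the full spaces. -/
def OE {X Y : Type} [MeasurableSpace X] [MeasurableSpace Y]
    (R : CBER X) (μ : Measure X) (S : CBER Y) (ν : Measure Y) : Prop :=
  ∃ E : SOEquiv R μ S ν, E.A = Set.univ ∧ E.B = Set.univ

/-- A probability measure preserving action of a group `G` on a measured space. -/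
structure PMPAction (G : Type) [Group G] (X : Type) [MeasurableSpace X]
    (μ : Measure X) where
  act : G → X → X
  act_one : ∀ x, act 1 x = x
  act_mul : ∀ g h x, act (g * h) x = act g (act h x)
  measurePreserving : ∀ g, MeasurePreserving (act g) μ μ

/-- Essential freeness: a.e. point has trivial stabilizer. -/
def PMPAction.IsFree {G X : Type} [Group G] [MeasurableSpace X] {μ : Measure X}
    (α : PMPAction G X μ) : Prop :=
  ∀ᵐ x ∂μ, ∀ g : G, α.act g x = x → g = 1

/-- `R` is the orbit equivalence relation of the action `α` restricted to the subgroup `H`. -/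
def IsOrbitRel {G X : Type} [Group G] [MeasurableSpace X] {μ : Measure X}
    (α : PMPAction G X μ) (H : Subgroup G) (R : CBER X) : Prop :=
  R.dom = Set.univ ∧ ∀ x y, (R.rel x y ↔ ∃ g ∈ H, α.act g x = y)

/-- A countable group is measurably freely indecomposable (MFI) if the orbit equivalence
relation of every free p.m.p. action of it on a standard probability space is freely
indecomposable. -/
def MFI (G : Type) [Group G] [Countable G] : Prop :=
  ∀ (X : Type) [MeasurableSpace X] [StandardBorelSpace X]
    (μ : Measure X) [IsProbabilityMeasure μ]
    (α : PMPAction G X μ) (R : CBER X),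
    α.IsFree → IsOrbitRel α ⊤ R → FreelyIndecomposableMod μ R

/-- `G` is the internal free product of the family of subgroups `H`. -/
def IsFreeProductOf (G : Type) [Group G] {ι : Type} (H : ι → Subgroup G) : Prop :=
  Function.Bijective (Monoid.CoprodI.lift fun i => (H i).subtype)

/-- A Borel fundamental domain for an action, of the coupling kind: meets a.e. orbit,
and meets each orbit at most once mod null. -/
def IsFundamentalDomainFor {G : Type} [Group G] {Ω : Type} [MeasurableSpace Ω]
    (ν : Measure Ω) (a : G → Ω → Ω) (D : Set Ω) : Prop :=
  MeasurableSet D ∧ (∀ᵐ x ∂ν, ∃ g : G, a g x ∈ D) ∧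
    ∀ g : G, g ≠ 1 → ν (D ∩ a g ⁻¹' D) = 0

/-- A measure equivalence coupling between `G` and `H`: a standard σ-finite measure space
with commuting measure-preserving essentially free actions of `G` and `H`, each admitting
a Borel fundamental domain of finite positive measure. -/
structure MECoupling (G : Type) [Group G] (H : Type) [Group H] where
  (Ω : Type)
  [mΩ : MeasurableSpace Ω]
  [sbΩ : StandardBorelSpace Ω]
  (ν : Measure Ω)
  sigmaFinite : SigmaFinite ν
  aG : G → Ω → Ω
  aH : H → Ω → Ω
  DG : Set Ω
  DH : Set Ω
  aG_one : ∀ x, aG 1 x = x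
  aG_mul : ∀ g g' x, aG (g * g') x = aG g (aG g' x)
  aH_one : ∀ x, aH 1 x = x
  aH_mul : ∀ h h' x, aH (h * h') x = aH h (aH h' x)
  comm : ∀ g h x, aG g (aH h x) = aH h (aG g x)
  mp_aG : ∀ g, MeasurePreserving (aG g) ν ν
  mp_aH : ∀ h, MeasurePreserving (aH h) ν ν
  free_aG : ∀ᵐ x ∂ν, ∀ g, aG g x = x → g = 1
  free_aH : ∀ᵐ x ∂ν, ∀ h, aH h x = x → h = 1
  fund_DG : IsFundamentalDomainFor ν aG DG
  fund_DH : IsFundamentalDomainFor ν aH DH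
  DG_pos : 0 < ν DG
  DG_fin : ν DG < ⊤
  DH_pos : 0 < ν DH
  DH_fin : ν DH < ⊤

/-- The generalized index (compression constant) of a measure equivalence coupling. -/
noncomputable def MECoupling.index {G : Type} [Group G] {H : Type} [Group H]
    (c : MECoupling G H) : ENNReal :=
  c.ν c.DH / c.ν c.DG

/-- Measure equivalence of countable groups. -/
def MeasureEquivalent (G : Type) [Group G] (H : Type) [Group H] : Prop :=
  Nonempty (MECoupling G H)

/-- Measure equivalence with a prescribed generalized index. -/
def MEwithIndex (G : Type) [Group G] (H : Type) [Group H] (κ : ENNReal) : Prop :=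
  ∃ c : MECoupling G H, c.index = κ

namespace FPNov

open Set

/-- A countable family of sets is *separated* if there are Borel supersets with empty
intersection. -/
def Sep (C : ℕ → Set ℝ) : Prop :=
  ∃ E : ℕ → Set ℝ, (∀ k, MeasurableSet (E k)) ∧ (∀ k, C k ⊆ E k) ∧ (⋂ k, E k) = ∅

theorem sep_combine (C : ℕ → Set ℝ) (k₀ : ℕ) (C' : ℕ → Set ℝ)
    (hC : C k₀ = ⋃ i, C' i) (h : ∀ i, Sep (Function.update C k₀ (C' i))) : Sep C := by
  choose E hmeas hsub hempty using h
  refine ⟨fun k => if k = k₀ then ⋃ i, E i k else ⋂ i, E i k, ?_, ?_, ?_⟩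
  · intro k
    simp only []
    split_ifs
    · exact MeasurableSet.iUnion fun i => hmeas i k
    · exact MeasurableSet.iInter fun i => hmeas i k
  · intro k
    simp only []
    split_ifs with hk
    · subst hk
      rw [hC]
      refine Set.iUnion_mono fun i => ?_
      have h1 := hsub i k
      rwa [Function.update_self] at h1
    · refine Set.subset_iInter fun i => ?_
      have h1 := hsub i k
      rwa [Function.update_of_ne hk] at h1
  · rw [Set.eq_empty_iff_forall_notMem]
    intro x hx
    have hx0 := Set.mem_iInter.1 hx k₀
    rw [if_pos rfl] at hx0
    obtain ⟨i₀, hi₀⟩ := Set.mem_iUnion.1 hx0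
    have : x ∈ ⋂ k, E i₀ k := by
      refine Set.mem_iInter.2 fun k => ?_
      by_cases hk : k = k₀
      · subst hk; exact hi₀
      · have := Set.mem_iInter.1 hx k
        rw [if_neg hk] at this
        exact Set.mem_iInter.1 this i₀
    rw [hempty i₀] at this
    exact this

/-- Cylinder determined by a finite sequence. -/
def Cyl (s : List ℕ) : Set (ℕ → ℕ) :=
  {w | ∀ i, ∀ h : i < s.length, w i = s[i]}

theorem cyl_nil : Cyl ([] : List ℕ) = univ := by
  ext w; simp [Cyl]

theorem cyl_append_subset (s : List ℕ) (i : ℕ) : Cyl (s ++ [i]) ⊆ Cyl s := by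
  intro w hw j hj
  have hj' : j < (s ++ [i]).length := by simp; omega
  have := hw j hj'
  rwa [List.getElem_append_left hj] at this

theorem cyl_succ (s : List ℕ) : Cyl s = ⋃ i : ℕ, Cyl (s ++ [i]) := by
  apply Set.Subset.antisymm
  · intro w hw
    refine Set.mem_iUnion.2 ⟨w s.length, ?_⟩
    intro j hj
    rcases Nat.lt_or_ge j s.length with h | h
    · rw [List.getElem_append_left h]
      exact hw j h
    · have : j = s.length := by simp at hj; omega
      subst this
      rw [List.getElem_append_right (le_refl _)]
      simp
  · exact Set.iUnion_subset fun i => cyl_append_subset s i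

theorem mem_cyl_of_agree {s : List ℕ} {w v : ℕ → ℕ} (hw : w ∈ Cyl s)
    (h : ∀ i < s.length, v i = w i) : v ∈ Cyl s := by
  intro i hi
  rw [h i hi]
  exact hw i hi

/-- Continuity at a point gives a cylinder modulus. -/
theorem cont_cyl {f : (ℕ → ℕ) → ℝ} (hf : Continuous f) (w : ℕ → ℕ) {ε : ℝ} (hε : 0 < ε) :
    ∃ n : ℕ, ∀ v : ℕ → ℕ, (∀ i < n, v i = w i) → dist (f v) (f w) < ε := by
  have hU : IsOpen (f ⁻¹' Metric.ball (f w) ε) := Metric.isOpen_ball.preimage hf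
  have hwU : w ∈ f ⁻¹' Metric.ball (f w) ε := by
    simp [Metric.mem_ball, hε]
  obtain ⟨I, u, hu, hsub⟩ := isOpen_pi_iff.1 hU w hwU
  refine ⟨I.sup id + 1, fun v hv => ?_⟩
  have hvU : v ∈ f ⁻¹' Metric.ball (f w) ε := by
    apply hsub
    intro i hi
    have : v i = w i := hv i (by
      have := Finset.le_sup (f := id) hi
      simp at this
      omega)
    rw [this]
    exact (hu i hi).2
  simpa [Metric.mem_ball] using hvU

end FPNov

namespace FPNov

open Set

/-- The family of analytic pieces at a state `σ` (one finite prefix per index). -/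
def CF (f : ℕ → (ℕ → ℕ) → ℝ) (σ : ℕ → List ℕ) : ℕ → Set ℝ := fun k => f k '' Cyl (σ k)

theorem cf_step (f : ℕ → (ℕ → ℕ) → ℝ) (σ : ℕ → List ℕ) (hσ : ¬ Sep (CF f σ)) (k₀ : ℕ) :
    ∃ i, ¬ Sep (CF f (Function.update σ k₀ (σ k₀ ++ [i]))) := by
  by_contra h
  push_neg at h
  apply hσ
  have hCF : ∀ i, CF f (Function.update σ k₀ (σ k₀ ++ [i])) =
      Function.update (CF f σ) k₀ (f k₀ '' Cyl (σ k₀ ++ [i])) := by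
    intro i
    funext k
    by_cases hk : k = k₀
    · subst hk
      simp [CF, Function.update_self]
    · simp [CF, Function.update_of_ne hk]
  refine sep_combine (CF f σ) k₀ (fun i => f k₀ '' Cyl (σ k₀ ++ [i])) ?_ ?_
  · show f k₀ '' Cyl (σ k₀) = _
    rw [cyl_succ, Set.image_iUnion]
  · intro i
    rw [← hCF i]
    exact h i

/-- The descent stream: starting from the inseparable family of full ranges, extend the
`(Nat.unpair t).1`-th prefix at stage `t`, preserving inseparability. -/
noncomputable def stream (f : ℕ → (ℕ → ℕ) → ℝ)
    (h0 : ¬ Sep (CF f fun _ => ([] : List ℕ))) : ℕ → {σ : ℕ → List ℕ // ¬ Sep (CF f σ)}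
  | 0 => ⟨fun _ => [], h0⟩
  | (t + 1) =>
    ⟨Function.update (stream f h0 t).1 (Nat.unpair t).1
        ((stream f h0 t).1 (Nat.unpair t).1 ++
          [(cf_step f (stream f h0 t).1 (stream f h0 t).2 (Nat.unpair t).1).choose]),
      (cf_step f (stream f h0 t).1 (stream f h0 t).2 (Nat.unpair t).1).choose_spec⟩

variable {f : ℕ → (ℕ → ℕ) → ℝ} {h0 : ¬ Sep (CF f fun _ => ([] : List ℕ))}

theorem stream_succ_def (t : ℕ) :
    (stream f h0 (t + 1)).1 = Function.update (stream f h0 t).1 (Nat.unpair t).1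
      ((stream f h0 t).1 (Nat.unpair t).1 ++
        [(cf_step f (stream f h0 t).1 (stream f h0 t).2 (Nat.unpair t).1).choose]) := by
  rw [stream]

theorem stream_prefix_succ (t k : ℕ) :
    (stream f h0 t).1 k <+: (stream f h0 (t + 1)).1 k := by
  rw [stream_succ_def]
  by_cases hk : k = (Nat.unpair t).1
  · subst hk
    rw [Function.update_self]
    exact List.prefix_append _ _
  · rw [Function.update_of_ne hk]

theorem stream_prefix {t t' : ℕ} (h : t ≤ t') (k : ℕ) :
    (stream f h0 t).1 k <+: (stream f h0 t').1 k := by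
  induction t' with
  | zero =>
    have h' : t = 0 := by omega
    subst h'
    exact List.prefix_refl _
  | succ t' ih =>
    rcases Nat.lt_or_ge t (t' + 1) with h' | h'
    · exact (ih (by omega)).trans (stream_prefix_succ t' k)
    · have h'' : t = t' + 1 := by omega
      subst h''
      exact List.prefix_refl _

theorem stream_len_succ (t : ℕ) :
    ((stream f h0 (t + 1)).1 (Nat.unpair t).1).length =
      ((stream f h0 t).1 (Nat.unpair t).1).length + 1 := by
  rw [stream_succ_def, Function.update_self, List.length_append]
  rfl

theorem stream_len_grow (k n : ℕ) : ∃ t, n ≤ ((stream f h0 t).1 k).length := by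
  induction n with
  | zero => exact ⟨0, Nat.zero_le _⟩
  | succ n ih =>
    obtain ⟨t, ht⟩ := ih
    refine ⟨Nat.pair k t + 1, ?_⟩
    have h1 : t ≤ Nat.pair k t := Nat.right_le_pair k t
    have h2 := (stream_prefix (f := f) (h0 := h0) h1 k).length_le
    have h3 := stream_len_succ (f := f) (h0 := h0) (Nat.pair k t)
    rw [Nat.unpair_pair] at h3
    have h3' : ((stream f h0 (Nat.pair k t + 1)).1 k).length =
        ((stream f h0 (Nat.pair k t)).1 k).length + 1 := h3
    omega

/-- The limit branch for index `k`. -/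
noncomputable def limb (f : ℕ → (ℕ → ℕ) → ℝ)
    (h0 : ¬ Sep (CF f fun _ => ([] : List ℕ))) (k : ℕ) : ℕ → ℕ := fun i =>
  ((stream f h0 (stream_len_grow (f := f) (h0 := h0) k (i + 1)).choose).1 k).getD i 0

theorem stream_agree {t t' k i : ℕ} (h : i < ((stream f h0 t).1 k).length)
    (h' : i < ((stream f h0 t').1 k).length) :
    ((stream f h0 t).1 k).getD i 0 = ((stream f h0 t').1 k).getD i 0 := by
  wlog hle : t ≤ t' generalizing t t'
  · exact (this h' h (by omega)).symm
  obtain ⟨r, hr⟩ := stream_prefix (f := f) (h0 := h0) hle k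
  rw [← hr]
  rw [List.getD_eq_getElem _ 0 h, List.getD_eq_getElem _ 0 (by rw [← hr] at h'; exact h')]
  exact (List.getElem_append_left h).symm

theorem limb_spec (k t i : ℕ) (h : i < ((stream f h0 t).1 k).length) :
    limb f h0 k i = ((stream f h0 t).1 k).getD i 0 := by
  have hc := (stream_len_grow (f := f) (h0 := h0) k (i + 1)).choose_spec
  exact stream_agree (by omega) h

theorem sep_univ_of_empty {C : ℕ → Set ℝ} (k₀ : ℕ) (h : C k₀ = ∅) : Sep C := by
  refine ⟨fun k => if k = k₀ then ∅ else univ, ?_, ?_, ?_⟩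
  · intro k
    simp only []
    split_ifs
    · exact MeasurableSet.empty
    · exact MeasurableSet.univ
  · intro k
    simp only []
    split_ifs with hk
    · subst hk
      rw [h]
    · exact subset_univ _
  · rw [Set.eq_empty_iff_forall_notMem]
    intro x hx
    have := Set.mem_iInter.1 hx k₀
    rwa [if_pos rfl] at this

/-- **Novikov's multiple separation theorem** (over `ℝ`): countably many analytic sets with
empty intersection can be enclosed in Borel sets with empty intersection. -/
theorem novikov (A : ℕ → Set ℝ) (hA : ∀ k, MeasureTheory.AnalyticSet (A k))
    (hI : (⋂ k, A k) = ∅) :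
    ∃ E : ℕ → Set ℝ, (∀ k, MeasurableSet (E k)) ∧ (∀ k, A k ⊆ E k) ∧ (⋂ k, E k) = ∅ := by
  by_cases hemp : ∃ k₀, A k₀ = ∅
  · obtain ⟨k₀, hk₀⟩ := hemp
    exact sep_univ_of_empty k₀ hk₀
  · push_neg at hemp
    have hFA : ∀ k, ∃ g : (ℕ → ℕ) → ℝ, Continuous g ∧ range g = A k := by
      intro k
      have h := hA k
      rw [MeasureTheory.AnalyticSet_def] at h
      rcases h with h | h
      · exact absurd h (hemp k).ne_empty
      · exact h
    choose f hcont hrange using hFA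
    by_contra hns
    have h0 : ¬ Sep (CF f fun _ => ([] : List ℕ)) := by
      have hcf : CF f (fun _ => ([] : List ℕ)) = A := by
        funext k
        rw [CF, cyl_nil, image_univ, hrange]
      rw [hcf]
      exact hns
    by_cases hall : ∀ k, f k (limb f h0 k) = f 0 (limb f h0 0)
    · have hmem : f 0 (limb f h0 0) ∈ ⋂ k, A k := by
        refine Set.mem_iInter.2 fun k => ?_
        rw [← hrange k, ← hall k]
        exact mem_range_self _
      rw [hI] at hmem
      exact hmem
    · push_neg at hall
      obtain ⟨k, hk⟩ := hall
      have hk0 : k ≠ 0 := by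
        intro h
        subst h
        exact hk rfl
      set d := dist (f k (limb f h0 k)) (f 0 (limb f h0 0)) with hd_def
      have hd : 0 < d := dist_pos.2 hk
      obtain ⟨n₁, hn₁⟩ := cont_cyl (hcont k) (limb f h0 k) (half_pos hd)
      obtain ⟨n₀, hn₀⟩ := cont_cyl (hcont 0) (limb f h0 0) (half_pos hd)
      obtain ⟨t₁, ht₁⟩ := stream_len_grow (f := f) (h0 := h0) k n₁
      obtain ⟨t₀, ht₀⟩ := stream_len_grow (f := f) (h0 := h0) 0 n₀
      set t := max t₁ t₀ with ht_def
      have hl₁ : n₁ ≤ ((stream f h0 t).1 k).length :=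
        le_trans ht₁ (stream_prefix (f := f) (h0 := h0) (le_max_left _ _) k).length_le
      have hl₀ : n₀ ≤ ((stream f h0 t).1 0).length :=
        le_trans ht₀ (stream_prefix (f := f) (h0 := h0) (le_max_right _ _) 0).length_le
      apply (stream f h0 t).2
      refine ⟨fun j => if j = k then Metric.ball (f k (limb f h0 k)) (d / 2)
        else if j = 0 then Metric.ball (f 0 (limb f h0 0)) (d / 2) else univ, ?_, ?_, ?_⟩
      · intro j
        simp only []
        split_ifs
        · exact Metric.isOpen_ball.measurableSet
        · exact Metric.isOpen_ball.measurableSet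
        · exact MeasurableSet.univ
      · intro j
        simp only []
        split_ifs with hjk hj0
        · subst hjk
          rintro x ⟨v, hv, rfl⟩
          rw [Metric.mem_ball]
          apply hn₁
          intro i hi
          have hilen : i < ((stream f h0 t).1 j).length := by omega
          rw [hv i hilen, ← List.getD_eq_getElem _ 0 hilen]
          exact (limb_spec j t i hilen).symm
        · subst hj0
          rintro x ⟨v, hv, rfl⟩
          rw [Metric.mem_ball]
          apply hn₀
          intro i hi
          have hilen : i < ((stream f h0 t).1 0).length := by omega
          rw [hv i hilen, ← List.getD_eq_getElem _ 0 hilen]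
          exact (limb_spec 0 t i hilen).symm
        · exact subset_univ _
      · rw [Set.eq_empty_iff_forall_notMem]
        intro x hx
        have hxk := Set.mem_iInter.1 hx k
        have hx0 := Set.mem_iInter.1 hx 0
        rw [if_pos rfl] at hxk
        rw [if_neg (Ne.symm hk0), if_pos rfl] at hx0
        rw [Metric.mem_ball] at hxk hx0
        have : d ≤ dist x (f k (limb f h0 k)) + dist x (f 0 (limb f h0 0)) := by
          rw [hd_def]
          have := dist_triangle (f k (limb f h0 k)) x (f 0 (limb f h0 0))
          rw [dist_comm (f k (limb f h0 k)) x] at this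
          exact this
        linarith

end FPNov

namespace FPNov

open Set

/-- The set of strictly increasing `k`-tuples inside the sections of `W`. -/
def TupSet (W : Set (ℝ × ℝ)) (k : ℕ) : Set (ℝ × (Fin k → ℝ)) :=
  {p | StrictMono p.2 ∧ ∀ i, (p.1, p.2 i) ∈ W}

theorem meas_tupSet {W : Set (ℝ × ℝ)} (hW : MeasurableSet W) (k : ℕ) :
    MeasurableSet (TupSet W k) := by
  have h1 : MeasurableSet {p : ℝ × (Fin k → ℝ) | StrictMono p.2} := by
    have : {p : ℝ × (Fin k → ℝ) | StrictMono p.2} =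
        ⋂ i, ⋂ j, ⋂ (_ : i < j), {p : ℝ × (Fin k → ℝ) | p.2 i < p.2 j} := by
      ext p
      simp only [Set.mem_setOf_eq, Set.mem_iInter]
      exact ⟨fun h i j hij => h hij, fun h a b hab => h a b hab⟩
    rw [this]
    refine MeasurableSet.iInter fun i => MeasurableSet.iInter fun j =>
      MeasurableSet.iInter fun _ => measurableSet_lt ?_ ?_
    · exact (measurable_pi_apply i).comp measurable_snd
    · exact (measurable_pi_apply j).comp measurable_snd
  have h2 : MeasurableSet {p : ℝ × (Fin k → ℝ) | ∀ i, (p.1, p.2 i) ∈ W} := by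
    have : {p : ℝ × (Fin k → ℝ) | ∀ i, (p.1, p.2 i) ∈ W} =
        ⋂ i, (fun p : ℝ × (Fin k → ℝ) => (p.1, p.2 i)) ⁻¹' W := by
      ext p
      simp [Set.mem_iInter]
    rw [this]
    refine MeasurableSet.iInter fun i => ?_
    have hm : Measurable fun p : ℝ × (Fin k → ℝ) => (p.1, p.2 i) := by
      exact measurable_fst.prodMk ((measurable_pi_apply i).comp measurable_snd)
    exact hm hW
  exact h1.inter h2

/-- Two strictly increasing `(N+1)`-tuples inside a section without increasing
`(N+2)`-tuples must coincide. -/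
theorem tup_unique {W : Set (ℝ × ℝ)} {N : ℕ}
    (hbound : ∀ (a : ℝ) (b : Fin (N + 2) → ℝ), StrictMono b → ¬ ∀ i, (a, b i) ∈ W)
    {a : ℝ} {b b' : Fin (N + 1) → ℝ} (hb : StrictMono b) (hb' : StrictMono b')
    (h1 : ∀ i, (a, b i) ∈ W) (h2 : ∀ i, (a, b' i) ∈ W) : b = b' := by
  classical
  set s : Finset ℝ := Finset.image b Finset.univ ∪ Finset.image b' Finset.univ with hs
  have hcardb : (Finset.image b Finset.univ).card = N + 1 := by
    rw [Finset.card_image_of_injective _ hb.injective, Finset.card_univ, Fintype.card_fin]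
  have hcardb' : (Finset.image b' Finset.univ).card = N + 1 := by
    rw [Finset.card_image_of_injective _ hb'.injective, Finset.card_univ, Fintype.card_fin]
  have hsW : ∀ c ∈ s, (a, c) ∈ W := by
    intro c hc
    rw [hs, Finset.mem_union] at hc
    rcases hc with hc | hc <;> rw [Finset.mem_image] at hc <;>
      obtain ⟨i, -, rfl⟩ := hc
    · exact h1 i
    · exact h2 i
  by_cases hcard : s.card ≤ N + 1
  · -- both images equal `s`, so both are the increasing enumeration of `s`
    have hbs : Finset.image b Finset.univ = s :=
      Finset.eq_of_subset_of_card_le Finset.subset_union_left (by omega)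
    have hb's : Finset.image b' Finset.univ = s :=
      Finset.eq_of_subset_of_card_le Finset.subset_union_right (by omega)
    have hscard : s.card = N + 1 := by rw [← hbs]; exact hcardb
    have hbmem : ∀ i, b i ∈ s := fun i => by
      rw [← hbs]; exact Finset.mem_image_of_mem b (Finset.mem_univ i)
    have hb'mem : ∀ i, b' i ∈ s := fun i => by
      rw [← hb's]; exact Finset.mem_image_of_mem b' (Finset.mem_univ i)
    have e1 := Finset.orderEmbOfFin_unique hscard hbmem hb
    have e2 := Finset.orderEmbOfFin_unique hscard hb'mem hb'
    rw [e1, e2]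
  · -- extract an increasing `(N+2)`-tuple, contradiction
    exfalso
    push_neg at hcard
    obtain ⟨t, hts, htcard⟩ := Finset.exists_subset_card_eq (hcard : N + 2 ≤ s.card)
    refine hbound a (t.orderEmbOfFin htcard) (t.orderEmbOfFin htcard).strictMono fun i => ?_
    exact hsW _ (hts (Finset.orderEmbOfFin_mem t htcard i))

/-- Projections of Borel sets with sections of size at most `N+1` are Borel
(bounded Lusin–Novikov, via the Lusin–Souslin theorem). -/
theorem bnd : ∀ (N : ℕ) (W : Set (ℝ × ℝ)), MeasurableSet W →
    (∀ (a : ℝ) (b : Fin (N + 1) → ℝ), StrictMono b → ¬ ∀ i, (a, b i) ∈ W) →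
    MeasurableSet (Prod.fst '' W) := by
  intro N
  induction N with
  | zero =>
    intro W hW hbound
    have hempty : W = ∅ := by
      rw [Set.eq_empty_iff_forall_notMem]
      rintro ⟨a, c⟩ hac
      refine hbound a (fun _ => c) ?_ fun i => hac
      intro i j hij
      exact absurd (Fin.lt_def.mp hij) (by omega)
    rw [hempty]
    simp
  | succ N ih =>
    intro W hW hbound
    have hP : MeasurableSet (TupSet W (N + 1)) := meas_tupSet hW (N + 1)
    have hinj : Set.InjOn Prod.fst (TupSet W (N + 1)) := by
      rintro ⟨a, b⟩ hab ⟨a', b'⟩ hab' (h : a = a')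
      subst h
      have hbb := tup_unique hbound hab.1 hab'.1 hab.2 hab'.2
      exact congrArg (Prod.mk a) hbb
    have hG : MeasurableSet (Prod.fst '' TupSet W (N + 1)) :=
      hP.image_of_measurable_injOn measurable_fst hinj
    set G := Prod.fst '' TupSet W (N + 1) with hGdef
    set W' := W ∩ {p : ℝ × ℝ | p.1 ∉ G} with hW'def
    have hW' : MeasurableSet W' := hW.inter (measurable_fst hG.compl)
    have hbound' : ∀ (a : ℝ) (b : Fin (N + 1) → ℝ), StrictMono b →
        ¬ ∀ i, (a, b i) ∈ W' := by
      intro a b hb hall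
      have haG : a ∉ G := (hall 0).2
      exact haG ⟨(a, b), ⟨hb, fun i => (hall i).1⟩, rfl⟩
    have hproj := ih W' hW' hbound'
    have hcover : Prod.fst '' W = Prod.fst '' W' ∪ G := by
      apply Set.Subset.antisymm
      · rintro a ⟨⟨a', c⟩, hac, rfl⟩
        by_cases haG : (a', c).1 ∈ G
        · exact Or.inr haG
        · exact Or.inl ⟨(a', c), ⟨hac, haG⟩, rfl⟩
      · rintro a (h | h)
        · obtain ⟨p, hp, rfl⟩ := h
          exact ⟨p, hp.1, rfl⟩
        · obtain ⟨⟨a', b⟩, hab, rfl⟩ := h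
          exact ⟨(a', b 0), hab.2 0, rfl⟩
    rw [hcover]
    exact hproj.union hG

end FPNov

namespace FPNov

open Set MeasureTheory

/-- The set of points whose section contains an increasing `k`-tuple. -/
def Dk (W : Set (ℝ × ℝ)) (k : ℕ) : Set ℝ := Prod.fst '' TupSet W k

theorem dk_analytic {W : Set (ℝ × ℝ)} (hW : MeasurableSet W) (k : ℕ) :
    AnalyticSet (Dk W k) :=
  ((meas_tupSet hW k).analyticSet).image_of_continuous continuous_fst

theorem dk_antitone {W : Set (ℝ × ℝ)} {k l : ℕ} (h : k ≤ l) : Dk W l ⊆ Dk W k := by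
  rintro a ⟨p, ⟨hb, hmem⟩, rfl⟩
  exact ⟨(p.1, p.2 ∘ Fin.castLE h),
    ⟨hb.comp (Fin.strictMono_castLE h), fun i => hmem _⟩, rfl⟩

theorem dk_inter_empty {W : Set (ℝ × ℝ)} (hfin : ∀ a : ℝ, {b | (a, b) ∈ W}.Finite) :
    (⋂ k, Dk W k) = ∅ := by
  rw [Set.eq_empty_iff_forall_notMem]
  intro a ha
  have h := Set.mem_iInter.1 ha ((hfin a).toFinset.card + 1)
  obtain ⟨p, ⟨hb, hmem⟩, hpa⟩ := h
  have himg : Finset.image p.2 Finset.univ ⊆ (hfin a).toFinset := by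
    intro c hc
    rw [Finset.mem_image] at hc
    obtain ⟨i, -, rfl⟩ := hc
    rw [Set.Finite.mem_toFinset]
    have hmi := hmem i
    rwa [hpa] at hmi
  have hcard := Finset.card_le_card himg
  rw [Finset.card_image_of_injective _ hb.injective, Finset.card_univ,
    Fintype.card_fin] at hcard
  omega

/-- **Lusin–Novikov (finite sections)** over `ℝ`: the first-coordinate projection of a
Borel subset of the plane all of whose vertical sections are finite is Borel. -/
theorem lnf {W : Set (ℝ × ℝ)} (hW : MeasurableSet W)
    (hfin : ∀ a : ℝ, {b | (a, b) ∈ W}.Finite) : MeasurableSet (Prod.fst '' W) := by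
  obtain ⟨E, hEm, hEsub, hEempty⟩ := novikov (fun k => Dk W (k + 1))
    (fun k => dk_analytic hW (k + 1))
    (by
      have h1 : (⋂ k, Dk W (k + 1)) ⊆ ⋂ k, Dk W k :=
        fun a ha => Set.mem_iInter.2 fun k =>
          dk_antitone (Nat.le_succ k) (Set.mem_iInter.1 ha k)
      have h2 := dk_inter_empty (W := W) hfin
      exact Set.eq_empty_of_subset_empty (by rw [← h2]; exact h1))
  set Xs : ℕ → Set ℝ := fun m => (⋂ j ∈ Finset.range (m + 1), E j)ᶜ with hXs
  have hXm : ∀ m, MeasurableSet (Xs m) := fun m =>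
    (MeasurableSet.biInter (Finset.range (m + 1)).countable_toSet fun j _ => hEm j).compl
  have key1 : ∀ m a, a ∈ Xs m → ∀ b : Fin (m + 2) → ℝ, StrictMono b →
      ¬ ∀ i, (a, b i) ∈ W := by
    intro m a haX b hb hall
    rw [hXs, Set.mem_compl_iff, Set.mem_iInter₂] at haX
    push_neg at haX
    obtain ⟨j, hj, hja⟩ := haX
    rw [Finset.mem_range] at hj
    apply hja
    apply hEsub j
    exact dk_antitone (by omega) ⟨(a, b), ⟨hb, hall⟩, rfl⟩
  have hWm : ∀ m, MeasurableSet (Prod.fst '' (W ∩ {p : ℝ × ℝ | p.1 ∈ Xs m})) := by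
    intro m
    apply bnd (m + 1)
    · exact hW.inter (measurable_fst (hXm m))
    · intro a b hb hall
      exact key1 m a (hall 0).2 b hb fun i => (hall i).1
  have hcover : Prod.fst '' W = ⋃ m, Prod.fst '' (W ∩ {p : ℝ × ℝ | p.1 ∈ Xs m}) := by
    apply Set.Subset.antisymm
    · rintro a ⟨p, hp, rfl⟩
      have : p.1 ∈ ⋃ m, Xs m := by
        by_contra hcon
        rw [Set.mem_iUnion] at hcon
        push_neg at hcon
        have hmem : p.1 ∈ ⋂ k, E k := by
          refine Set.mem_iInter.2 fun k => ?_
          have := hcon k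
          rw [hXs, Set.mem_compl_iff, not_not] at this
          exact Set.mem_iInter₂.1 this k (Finset.self_mem_range_succ k)
        rw [hEempty] at hmem
        exact hmem
      obtain ⟨m, hm⟩ := Set.mem_iUnion.1 this
      exact Set.mem_iUnion.2 ⟨m, ⟨p, ⟨hp, hm⟩, rfl⟩⟩
    · exact Set.iUnion_subset fun m => Set.image_mono Set.inter_subset_left
  rw [hcover]
  exact MeasurableSet.iUnion hWm

end FPNov

/-! ### Auxiliary machinery for the free product decomposition of a treeable CBER -/

namespace FPAux

variable {X : Type} [MeasurableSpace X]

/-- The `m`-th "move" of the graphing: `toFun` of `Φ (m/2)` if `m` is even,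
`invFun` of `Φ (m/2)` if `m` is odd. -/
def mfun (Φ : ℕ → PBI X) (m : ℕ) : X → X :=
  if m % 2 = 0 then (Φ (m / 2)).toFun else (Φ (m / 2)).invFun

/-- Domain of the `m`-th move. -/
def mdom (Φ : ℕ → PBI X) (m : ℕ) : Set X :=
  if m % 2 = 0 then (Φ (m / 2)).src else (Φ (m / 2)).tgt

/-- `Mv Φ m a b` : the `m`-th move is defined at `a` and sends it to `b`. -/
def Mv (Φ : ℕ → PBI X) (m : ℕ) (a b : X) : Prop :=
  a ∈ mdom Φ m ∧ mfun Φ m a = b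

/-- Code of the inverse move. -/
def minv (m : ℕ) : ℕ := if m % 2 = 0 then m + 1 else m - 1

theorem mv_even {Φ : ℕ → PBI X} {i : ℕ} {a b : X} :
    Mv Φ (2 * i) a b ↔ a ∈ (Φ i).src ∧ (Φ i).toFun a = b := by
  have h0 : (2 * i) % 2 = 0 := by omega
  have h1 : (2 * i) / 2 = i := by omega
  simp [Mv, mdom, mfun, h0, h1]

theorem mv_odd {Φ : ℕ → PBI X} {i : ℕ} {a b : X} :
    Mv Φ (2 * i + 1) a b ↔ a ∈ (Φ i).tgt ∧ (Φ i).invFun a = b := by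
  have h0 : (2 * i + 1) % 2 = 1 := by omega
  have h1 : (2 * i + 1) / 2 = i := by omega
  simp [Mv, mdom, mfun, h0, h1]

theorem minv_even (i : ℕ) : minv (2 * i) = 2 * i + 1 := by
  have h0 : (2 * i) % 2 = 0 := by omega
  simp [minv, h0]

theorem minv_odd (i : ℕ) : minv (2 * i + 1) = 2 * i := by
  have h0 : (2 * i + 1) % 2 = 1 := by omega
  simp [minv, h0]

theorem exists_parity (m : ℕ) : ∃ i, m = 2 * i ∨ m = 2 * i + 1 := ⟨m / 2, by omega⟩

theorem mv_flip {Φ : ℕ → PBI X} {m : ℕ} {a b : X} (h : Mv Φ m a b) :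
    Mv Φ (minv m) b a := by
  obtain ⟨i, rfl | rfl⟩ := exists_parity m
  · rw [mv_even] at h
    rw [minv_even, mv_odd]
    refine ⟨h.2 ▸ (Φ i).mapsTo h.1, ?_⟩
    rw [← h.2]
    exact (Φ i).left_inv a h.1
  · rw [mv_odd] at h
    rw [minv_odd, mv_even]
    refine ⟨h.2 ▸ (Φ i).mapsTo_inv h.1, ?_⟩
    rw [← h.2]
    exact (Φ i).right_inv a h.1

theorem mv_inj {Φ : ℕ → PBI X} {m : ℕ} {a b c : X}
    (h1 : Mv Φ m a c) (h2 : Mv Φ m b c) : a = b := by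
  have f1 := mv_flip h1
  have f2 := mv_flip h2
  rw [← f1.2, ← f2.2]

theorem mv_pbistep {Φ : ℕ → PBI X} {m : ℕ} {a b : X} (h : Mv Φ m a b) :
    PBIStep (Φ (m / 2)) (decide (m % 2 = 0)) a b := by
  obtain ⟨i, rfl | rfl⟩ := exists_parity m
  · have h0 : (2 * i) % 2 = 0 := by omega
    have h1 : (2 * i) / 2 = i := by omega
    rw [mv_even] at h
    rw [h0, h1]
    simpa [PBIStep] using h
  · have h0 : (2 * i + 1) % 2 = 1 := by omega
    have h1 : (2 * i + 1) / 2 = i := by omega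
    rw [mv_odd] at h
    rw [h0, h1]
    simpa [PBIStep] using h

/-- In a treeing, no move has a fixed point. -/
theorem mv_ne_self {Φ : ℕ → PBI X} (hT : IsTreeing Φ) {m : ℕ} {a b : X}
    (h : Mv Φ m a b) : a ≠ b := by
  intro e
  subst e
  obtain ⟨j, hj, -⟩ :=
    hT 1 (fun _ => m / 2) (fun _ => decide (m % 2 = 0)) (fun _ => a) one_pos rfl
      (fun j _ => mv_pbistep h)
  omega

theorem meas_mfun (Φ : ℕ → PBI X) (m : ℕ) : Measurable (mfun Φ m) := by
  unfold mfun
  split_ifs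
  exacts [(Φ _).meas_toFun, (Φ _).meas_invFun]

theorem meas_mdom (Φ : ℕ → PBI X) (m : ℕ) : MeasurableSet (mdom Φ m) := by
  unfold mdom
  split_ifs
  exacts [(Φ _).src_meas, (Φ _).tgt_meas]

theorem meas_mv {f : X → ℝ} (hf : MeasurableEmbedding f) (Φ : ℕ → PBI X) (m : ℕ) :
    MeasurableSet {p : X × X | Mv Φ m p.1 p.2} := by
  have hset : {p : X × X | Mv Φ m p.1 p.2} =
      (Prod.fst ⁻¹' mdom Φ m) ∩ {p : X × X | f (mfun Φ m p.1) = f p.2} := by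
    ext p
    simp only [Mv, Set.mem_setOf_eq, Set.mem_inter_iff, Set.mem_preimage]
    exact and_congr_right fun _ =>
      ⟨fun h => by rw [h], fun h => hf.injective h⟩
  rw [hset]
  exact (measurable_fst (meas_mdom Φ m)).inter
    (measurableSet_eq_fun (hf.measurable.comp ((meas_mfun Φ m).comp measurable_fst))
      (hf.measurable.comp measurable_snd))

/-- Enumeration of pairs of rationals. -/
noncomputable def qq : ℕ → ℚ × ℚ := fun k => (Denumerable.eqv (ℚ × ℚ)).symm k

theorem qq_surj (p : ℚ × ℚ) : ∃ k, qq k = p :=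
  ⟨Denumerable.eqv (ℚ × ℚ) p, by simp [qq]⟩

/-- The `k`-th rational interval contains `f a` but not `f b`. -/
def qcond (f : X → ℝ) (k : ℕ) (a b : X) : Prop :=
  ((qq k).1 : ℝ) < f a ∧ f a < ((qq k).2 : ℝ) ∧
    ¬(((qq k).1 : ℝ) < f b ∧ f b < ((qq k).2 : ℝ))

theorem meas_qcond {f : X → ℝ} (hf : MeasurableEmbedding f) (k : ℕ) :
    MeasurableSet {p : X × X | qcond f k p.1 p.2} := by
  have h1 : Measurable fun p : X × X => f p.1 := hf.measurable.comp measurable_fst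
  have h2 : Measurable fun p : X × X => f p.2 := hf.measurable.comp measurable_snd
  have hA : MeasurableSet {p : X × X | ((qq k).1 : ℝ) < f p.1} :=
    measurableSet_lt measurable_const h1
  have hB : MeasurableSet {p : X × X | f p.1 < ((qq k).2 : ℝ)} :=
    measurableSet_lt h1 measurable_const
  have hC : MeasurableSet {p : X × X | ((qq k).1 : ℝ) < f p.2 ∧ f p.2 < ((qq k).2 : ℝ)} :=
    (measurableSet_lt measurable_const h2).inter (measurableSet_lt h2 measurable_const)
  have hset : {p : X × X | qcond f k p.1 p.2} =
      ({p : X × X | ((qq k).1 : ℝ) < f p.1} ∩ {p : X × X | f p.1 < ((qq k).2 : ℝ)}) ∩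
        {p : X × X | ((qq k).1 : ℝ) < f p.2 ∧ f p.2 < ((qq k).2 : ℝ)}ᶜ := by
    ext p
    simp only [qcond, Set.mem_setOf_eq, Set.mem_inter_iff, Set.mem_compl_iff]
    tauto
  rw [hset]
  exact (hA.inter hB).inter hC.compl

/-- The color of an edge: `c.1` is the least move sending the `f`-smaller endpoint to the
larger one, `c.2` is the least rational interval separating the two endpoints. -/
def Col (Φ : ℕ → PBI X) (f : X → ℝ) (c : ℕ × ℕ) (a b : X) : Prop :=
  f a < f b ∧ (Mv Φ c.1 a b ∧ ∀ m < c.1, ¬ Mv Φ m a b) ∧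
    (qcond f c.2 a b ∧ ∀ k < c.2, ¬ qcond f k a b)

/-- Unordered version of `Col`. -/
def Ecol (Φ : ℕ → PBI X) (f : X → ℝ) (c : ℕ × ℕ) (a b : X) : Prop :=
  Col Φ f c a b ∨ Col Φ f c b a

theorem meas_col {f : X → ℝ} (hf : MeasurableEmbedding f) (Φ : ℕ → PBI X) (c : ℕ × ℕ) :
    MeasurableSet {p : X × X | Col Φ f c p.1 p.2} := by
  have h1 : Measurable fun p : X × X => f p.1 := hf.measurable.comp measurable_fst
  have h2 : Measurable fun p : X × X => f p.2 := hf.measurable.comp measurable_snd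
  have hset : {p : X × X | Col Φ f c p.1 p.2} =
      ({p : X × X | f p.1 < f p.2} ∩
        ({p : X × X | Mv Φ c.1 p.1 p.2} ∩
          (⋂ m, ⋂ (_ : m < c.1), {p : X × X | Mv Φ m p.1 p.2}ᶜ))) ∩
        ({p : X × X | qcond f c.2 p.1 p.2} ∩
          (⋂ k, ⋂ (_ : k < c.2), {p : X × X | qcond f k p.1 p.2}ᶜ)) := by
    ext p
    simp only [Col, Set.mem_setOf_eq, Set.mem_inter_iff, Set.mem_iInter,
      Set.mem_compl_iff]
    tauto
  rw [hset]
  exact ((measurableSet_lt h1 h2).inter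
      ((meas_mv hf Φ c.1).inter
        (MeasurableSet.iInter fun m => MeasurableSet.iInter fun _ => (meas_mv hf Φ m).compl))).inter
    ((meas_qcond hf c.2).inter
      (MeasurableSet.iInter fun k => MeasurableSet.iInter fun _ => (meas_qcond hf k).compl))

theorem meas_ecol {f : X → ℝ} (hf : MeasurableEmbedding f) (Φ : ℕ → PBI X) (c : ℕ × ℕ) :
    MeasurableSet {p : X × X | Ecol Φ f c p.1 p.2} := by
  have hset : {p : X × X | Ecol Φ f c p.1 p.2} =
      {p : X × X | Col Φ f c p.1 p.2} ∪ Prod.swap ⁻¹' {p : X × X | Col Φ f c p.1 p.2} := by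
    ext p
    simp only [Ecol, Set.mem_setOf_eq, Set.mem_union, Set.mem_preimage, Prod.fst_swap,
      Prod.snd_swap]
  rw [hset]
  exact (meas_col hf Φ c).union (measurable_swap (meas_col hf Φ c))

end FPAux

namespace FPAux

variable {X : Type} [MeasurableSpace X]

theorem ecol_symm {Φ : ℕ → PBI X} {f : X → ℝ} {c : ℕ × ℕ} {a b : X}
    (h : Ecol Φ f c a b) : Ecol Φ f c b a := h.symm

theorem ecol_ne {Φ : ℕ → PBI X} {f : X → ℝ} {c : ℕ × ℕ} {a b : X}
    (h : Ecol Φ f c a b) : f a ≠ f b := by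
  rcases h with h | h
  · exact ne_of_lt h.1
  · exact (ne_of_lt h.1).symm

theorem ecol_mv' {Φ : ℕ → PBI X} {f : X → ℝ} {c : ℕ × ℕ} {a b : X}
    (h : Ecol Φ f c a b) : Mv Φ c.1 a b ∨ Mv Φ (minv c.1) a b := by
  rcases h with h | h
  · exact Or.inl h.2.1.1
  · exact Or.inr (mv_flip h.2.1.1)

theorem nat_least_unique {P : ℕ → Prop} {m m' : ℕ}
    (h : P m ∧ ∀ k < m, ¬ P k) (h' : P m' ∧ ∀ k < m', ¬ P k) : m = m' := by
  rcases lt_trichotomy m m' with hl | he | hl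
  · exact absurd h.1 (h'.2 _ hl)
  · exact he
  · exact absurd h'.1 (h.2 _ hl)

theorem col_unique {Φ : ℕ → PBI X} {f : X → ℝ} {c c' : ℕ × ℕ} {a b : X}
    (h : Col Φ f c a b) (h' : Col Φ f c' a b) : c = c' :=
  Prod.ext (nat_least_unique (P := fun m => Mv Φ m a b) h.2.1 h'.2.1)
    (nat_least_unique (P := fun k => qcond f k a b) h.2.2 h'.2.2)

theorem ecol_unique {Φ : ℕ → PBI X} {f : X → ℝ} {c c' : ℕ × ℕ} {a b : X}
    (h : Ecol Φ f c a b) (h' : Ecol Φ f c' a b) : c = c' := by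
  rcases h with h | h <;> rcases h' with h' | h'
  · exact col_unique h h'
  · exact absurd (h.1.trans h'.1) (lt_irrefl _)
  · exact absurd (h.1.trans h'.1) (lt_irrefl _)
  · exact col_unique h h'

/-- Properness: two edges with the same color sharing the endpoint `a` coincide. -/
theorem ecol_proper {Φ : ℕ → PBI X} {f : X → ℝ} {c : ℕ × ℕ} {a b b' : X}
    (h : Ecol Φ f c a b) (h' : Ecol Φ f c a b') : b = b' := by
  rcases h with h | h <;> rcases h' with h' | h'
  · exact h.2.1.1.2.symm.trans h'.2.1.1.2
  · exact absurd ⟨h.2.2.1.1, h.2.2.1.2.1⟩ h'.2.2.1.2.2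
  · exact absurd ⟨h'.2.2.1.1, h'.2.2.1.2.1⟩ h.2.2.1.2.2
  · exact mv_inj h.2.1.1 h'.2.1.1

theorem col_exists {Φ : ℕ → PBI X} {f : X → ℝ} {a b : X}
    (hm : ∃ m, Mv Φ m a b) (hab : f a < f b) : ∃ c, Col Φ f c a b := by
  classical
  have hq : ∃ k, qcond f k a b := by
    obtain ⟨q, hq1, hq2⟩ := exists_rat_btwn hab
    obtain ⟨p, hp⟩ := exists_rat_lt (f a)
    obtain ⟨k, hk⟩ := qq_surj (p, q)
    refine ⟨k, ?_⟩
    rw [qcond, hk]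
    exact ⟨hp, hq1, fun hc => absurd hc.2 (not_lt.2 hq2.le)⟩
  exact ⟨(Nat.find hm, Nat.find hq), hab,
    ⟨Nat.find_spec hm, fun m h => Nat.find_min hm h⟩,
    ⟨Nat.find_spec hq, fun k h => Nat.find_min hq h⟩⟩

theorem ecol_exists {Φ : ℕ → PBI X} {f : X → ℝ} {a b : X}
    (hm : ∃ m, Mv Φ m a b) (hne : f a ≠ f b) : ∃ c, Ecol Φ f c a b := by
  rcases hne.lt_or_gt with h | h
  · obtain ⟨c, hc⟩ := col_exists hm h
    exact ⟨c, Or.inl hc⟩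
  · have hm' : ∃ m, Mv Φ m b a := hm.elim fun m h' => ⟨minv m, mv_flip h'⟩
    obtain ⟨c, hc⟩ := col_exists hm' h
    exact ⟨c, Or.inr hc⟩

/-- The set of endpoints of edges of color `c`. -/
def Dc (Φ : ℕ → PBI X) (f : X → ℝ) (c : ℕ × ℕ) : Set X := {x | ∃ y, Ecol Φ f c x y}

theorem dc_eq (Φ : ℕ → PBI X) (f : X → ℝ) (c : ℕ × ℕ) :
    Dc Φ f c = ⋃ m, (mdom Φ m ∩ (fun x => (x, mfun Φ m x)) ⁻¹' {p : X × X | Ecol Φ f c p.1 p.2}) := by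
  ext x
  simp only [Dc, Set.mem_setOf_eq, Set.mem_iUnion, Set.mem_inter_iff, Set.mem_preimage]
  constructor
  · rintro ⟨y, hy⟩
    rcases ecol_mv' hy with h | h
    · exact ⟨c.1, h.1, by rw [h.2]; exact hy⟩
    · exact ⟨minv c.1, h.1, by rw [h.2]; exact hy⟩
  · rintro ⟨m, -, he⟩
    exact ⟨_, he⟩

theorem meas_dc {f : X → ℝ} (hf : MeasurableEmbedding f) (Φ : ℕ → PBI X) (c : ℕ × ℕ) :
    MeasurableSet (Dc Φ f c) := by
  rw [dc_eq]
  exact MeasurableSet.iUnion fun m =>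
    (meas_mdom Φ m).inter ((measurable_id.prodMk (meas_mfun Φ m)) (meas_ecol hf Φ c))

/-- The finite subrelation of color `c`. -/
noncomputable def Rfc (Φ : ℕ → PBI X) {f : X → ℝ} (hf : MeasurableEmbedding f)
    (c : ℕ × ℕ) : CBER X where
  dom := Dc Φ f c
  dom_meas := meas_dc hf Φ c
  rel a b := Ecol Φ f c a b ∨ (a = b ∧ a ∈ Dc Φ f c)
  rel_meas := by
    have hset : {p : X × X | Ecol Φ f c p.1 p.2 ∨ (p.1 = p.2 ∧ p.1 ∈ Dc Φ f c)} =
        {p : X × X | Ecol Φ f c p.1 p.2} ∪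
          ({p : X × X | f p.1 = f p.2} ∩ Prod.fst ⁻¹' Dc Φ f c) := by
      ext p
      simp only [Set.mem_setOf_eq, Set.mem_union, Set.mem_inter_iff, Set.mem_preimage]
      constructor
      · rintro (h | ⟨he, hd⟩)
        · exact Or.inl h
        · exact Or.inr ⟨by rw [he], hd⟩
      · rintro (h | ⟨he, hd⟩)
        · exact Or.inl h
        · exact Or.inr ⟨hf.injective he, hd⟩
    rw [hset]
    exact (meas_ecol hf Φ c).union
      ((measurableSet_eq_fun (hf.measurable.comp measurable_fst)
        (hf.measurable.comp measurable_snd)).inter (measurable_fst (meas_dc hf Φ c)))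
  rel_dom := by
    rintro x y (h | ⟨rfl, hd⟩)
    · exact ⟨⟨y, h⟩, ⟨x, ecol_symm h⟩⟩
    · exact ⟨hd, hd⟩
  refl := fun x hx => Or.inr ⟨rfl, hx⟩
  symm := by
    rintro x y (h | ⟨rfl, hd⟩)
    · exact Or.inl (ecol_symm h)
    · exact Or.inr ⟨rfl, hd⟩
  trans := by
    rintro x y z (h1 | ⟨rfl, hd⟩) (h2 | ⟨he2, hd2⟩)
    · have hxz : x = z := ecol_proper (ecol_symm h1) h2
      exact Or.inr ⟨hxz, ⟨y, h1⟩⟩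
    · exact Or.inl (he2 ▸ h1)
    · exact Or.inl h2
    · exact Or.inr ⟨he2, hd2⟩
  countable_classes := by
    intro x
    refine Set.Countable.mono ?_
      ((Set.finite_singleton x |>.insert (mfun Φ c.1 x) |>.insert
        (mfun Φ (minv c.1) x)).countable)
    rintro y (h | ⟨rfl, -⟩)
    · rcases ecol_mv' h with hm | hm
      · rw [← hm.2]
        exact Set.mem_insert_iff.2 (Or.inr (Set.mem_insert _ _))
      · rw [← hm.2]
        exact Set.mem_insert _ _
    · exact Set.mem_insert_iff.2 (Or.inr (Set.mem_insert_iff.2 (Or.inr rfl)))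

theorem rfc_finite (Φ : ℕ → PBI X) {f : X → ℝ} (hf : MeasurableEmbedding f) (c : ℕ × ℕ) :
    (Rfc Φ hf c).FiniteClasses := by
  intro x _
  refine Set.Finite.subset
    ((Set.finite_singleton x |>.insert (mfun Φ c.1 x) |>.insert
      (mfun Φ (minv c.1) x))) ?_
  rintro y (h | ⟨rfl, -⟩)
  · rcases ecol_mv' h with hm | hm
    · rw [← hm.2]
      exact Set.mem_insert_iff.2 (Or.inr (Set.mem_insert _ _))
    · rw [← hm.2]
      exact Set.mem_insert _ _
  · exact Set.mem_insert_iff.2 (Or.inr (Set.mem_insert_iff.2 (Or.inr rfl)))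

end FPAux

namespace FPAux

variable {X : Type} [MeasurableSpace X]

theorem mv_rel {Φ : ℕ → PBI X} {R : CBER X} (hG : GeneratesCBER Φ R)
    {m : ℕ} {a b : X} (h : Mv Φ m a b) : R.rel a b := by
  obtain ⟨i, rfl | rfl⟩ := exists_parity m
  · rw [mv_even] at h
    have := (hG.2.1 i).2 a h.1
    rwa [h.2] at this
  · have h' := mv_flip h
    rw [minv_odd, mv_even] at h'
    have := (hG.2.1 i).2 b h'.1
    rw [h'.2] at this
    exact R.symm this

theorem mdom_sub {Φ : ℕ → PBI X} {R : CBER X} (hG : GeneratesCBER Φ R) (m : ℕ) :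
    mdom Φ m ⊆ R.dom := by
  intro x hx
  rw [hG.1]
  obtain ⟨i, rfl | rfl⟩ := exists_parity m
  · have h0 : (2 * i) % 2 = 0 := by omega
    have h1 : (2 * i) / 2 = i := by omega
    rw [mdom, if_pos h0, h1] at hx
    exact Set.mem_iUnion.2 ⟨i, Or.inl hx⟩
  · have h0 : (2 * i + 1) % 2 = 1 := by omega
    have h1 : (2 * i + 1) / 2 = i := by omega
    rw [mdom, if_neg (by omega : ¬ (2 * i + 1) % 2 = 0), h1] at hx
    exact Set.mem_iUnion.2 ⟨i, Or.inr hx⟩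

theorem dc_sub {Φ : ℕ → PBI X} {f : X → ℝ} {R : CBER X} (hG : GeneratesCBER Φ R)
    (c : ℕ × ℕ) : Dc Φ f c ⊆ R.dom := by
  rintro x ⟨y, hy⟩
  rcases ecol_mv' hy with h | h
  · exact mdom_sub hG c.1 h.1
  · exact mdom_sub hG (minv c.1) h.1

theorem rfc_subrel {Φ : ℕ → PBI X} {f : X → ℝ} (hf : MeasurableEmbedding f)
    {R : CBER X} (hG : GeneratesCBER Φ R) (c : ℕ × ℕ) :
    (Rfc Φ hf c).IsSubrelOf R := by
  refine ⟨dc_sub hG c, ?_⟩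
  rintro x y (h | ⟨rfl, hd⟩)
  · rcases ecol_mv' h with hm | hm
    · exact mv_rel hG hm
    · exact mv_rel hG hm
  · exact R.refl x (dc_sub hG c hd)

theorem dom_eq {Φ : ℕ → PBI X} {f : X → ℝ} (hf : MeasurableEmbedding f)
    (hT : IsTreeing Φ) {R : CBER X} (hG : GeneratesCBER Φ R) :
    R.dom = ⋃ c : ℕ × ℕ, Dc Φ f c := by
  apply Set.Subset.antisymm
  · intro x hx
    rw [hG.1] at hx
    obtain ⟨i, hi⟩ := Set.mem_iUnion.1 hx
    have key : ∃ m, x ∈ mdom Φ m := by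
      rcases hi with hs | ht
      · refine ⟨2 * i, ?_⟩
        rw [mdom, if_pos (by omega : (2 * i) % 2 = 0), (by omega : (2 * i) / 2 = i)]
        exact hs
      · refine ⟨2 * i + 1, ?_⟩
        rw [mdom, if_neg (by omega : ¬ (2 * i + 1) % 2 = 0),
          (by omega : (2 * i + 1) / 2 = i)]
        exact ht
    obtain ⟨m, hm⟩ := key
    have hmv : Mv Φ m x (mfun Φ m x) := ⟨hm, rfl⟩
    have hne : x ≠ mfun Φ m x := mv_ne_self hT hmv
    have hfne : f x ≠ f (mfun Φ m x) := fun e => hne (hf.injective e)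
    obtain ⟨c, hc⟩ := ecol_exists ⟨m, hmv⟩ hfne
    exact Set.mem_iUnion.2 ⟨c, ⟨_, hc⟩⟩
  · exact Set.iUnion_subset fun c => dc_sub hG c

theorem freely {Φ : ℕ → PBI X} {f : X → ℝ} (hf : MeasurableEmbedding f)
    (hT : IsTreeing Φ) : FreelyIndep (fun c : ℕ × ℕ => Rfc Φ hf c) := by
  classical
  intro n x i hn hxn hne hrel
  have hE : ∀ j, j < n → Ecol Φ f (i j) (x j) (x (j + 1)) := by
    intro j hj
    rcases hrel j hj with h | ⟨he, -⟩
    · exact h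
    · exact absurd he (hne j hj)
  have hM : ∀ j, j < n → ∃ m, Mv Φ m (x j) (x (j + 1)) := fun j hj =>
    (ecol_mv' (hE j hj)).elim (fun h => ⟨_, h⟩) (fun h => ⟨_, h⟩)
  set msq : ℕ → ℕ := fun j =>
    if h : ∃ m, Mv Φ m (x j) (x (j + 1)) then Nat.find h else 0 with hmsq
  have hmv : ∀ j, j < n → Mv Φ (msq j) (x j) (x (j + 1)) := by
    intro j hj
    rw [hmsq]
    simp only [dif_pos (hM j hj)]
    exact Nat.find_spec (hM j hj)
  obtain ⟨j, hj1, hj2, hj3⟩ :=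
    hT n (fun j => msq j / 2) (fun j => decide (msq j % 2 = 0)) x (by omega) hxn
      (fun j hj => mv_pbistep (hmv j hj))
  have hjn : j < n := by omega
  have h1 := hmv j hjn
  have h2 := hmv (j + 1) hj1
  have hpar : msq j % 2 ≠ msq (j + 1) % 2 := fun e => hj3 (by rw [e])
  have hKey : x (j + 2) = x j := by
    have hd2 : msq j / 2 = msq (j + 1) / 2 := hj2
    rcases Nat.even_or_odd (msq j) with hev | hod
    · have h0 : msq j % 2 = 0 := Nat.even_iff.mp hev
      have e1 : msq j = 2 * (msq j / 2) := by omega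
      have e2 : msq (j + 1) = 2 * (msq (j + 1) / 2) + 1 := by omega
      rw [e1, mv_even] at h1
      rw [e2, mv_odd, ← hd2] at h2
      rw [← h2.2, ← h1.2]
      exact (Φ (msq j / 2)).left_inv (x j) h1.1
    · have h0 : msq j % 2 = 1 := Nat.odd_iff.mp hod
      have e1 : msq j = 2 * (msq j / 2) + 1 := by omega
      have e2 : msq (j + 1) = 2 * (msq (j + 1) / 2) := by omega
      rw [e1, mv_odd] at h1
      rw [e2, mv_even, ← hd2] at h2
      rw [← h2.2, ← h1.2]
      exact (Φ (msq j / 2)).right_inv (x j) h1.1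
  refine ⟨j, hj1, ?_⟩
  have hE1 := hE j hjn
  have hE2 := hE (j + 1) hj1
  rw [hKey] at hE2
  exact ecol_unique hE1 (ecol_symm hE2)

theorem gen_iff {Φ : ℕ → PBI X} {f : X → ℝ} (hf : MeasurableEmbedding f)
    (hT : IsTreeing Φ) {R : CBER X} (hG : GeneratesCBER Φ R) (x y : X) :
    R.rel x y ↔ (x ∈ R.dom ∧
      Relation.EqvGen (fun a b => ∃ c : ℕ × ℕ, (Rfc Φ hf c).rel a b) x y) := by
  have step : ∀ a b : X, (∃ i, a ∈ (Φ i).src ∧ (Φ i).toFun a = b) →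
      Relation.EqvGen (fun a b => ∃ c : ℕ × ℕ, (Rfc Φ hf c).rel a b) a b := by
    rintro a b ⟨i, hs, he⟩
    have hmv : Mv Φ (2 * i) a b := mv_even.2 ⟨hs, he⟩
    have hne := mv_ne_self hT hmv
    have hfne : f a ≠ f b := fun e => hne (hf.injective e)
    obtain ⟨c, hc⟩ := ecol_exists ⟨_, hmv⟩ hfne
    exact Relation.EqvGen.rel a b ⟨c, Or.inl hc⟩
  have reduce : ∀ a b : X,
      Relation.EqvGen (fun a b => ∃ i, a ∈ (Φ i).src ∧ (Φ i).toFun a = b) a b →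
      Relation.EqvGen (fun a b => ∃ c : ℕ × ℕ, (Rfc Φ hf c).rel a b) a b := by
    intro a b h
    induction h with
    | rel a b hab => exact step a b hab
    | refl a => exact Relation.EqvGen.refl a
    | symm a b _ ih => exact Relation.EqvGen.symm a b ih
    | trans a b c _ _ ih1 ih2 => exact Relation.EqvGen.trans a b c ih1 ih2
  have key : ∀ a b : X,
      Relation.EqvGen (fun a b => ∃ c : ℕ × ℕ, (Rfc Φ hf c).rel a b) a b →
      a = b ∨ R.rel a b := by
    intro a b h
    induction h with
    | rel a b hab =>
      obtain ⟨c, hc⟩ := hab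
      exact Or.inr ((rfc_subrel hf hG c).2 a b hc)
    | refl a => exact Or.inl rfl
    | symm a b _ ih =>
      rcases ih with rfl | h'
      · exact Or.inl rfl
      · exact Or.inr (R.symm h')
    | trans a b c _ _ ih1 ih2 =>
      rcases ih1 with rfl | h1
      · exact ih2
      · rcases ih2 with rfl | h2
        · exact Or.inr h1
        · exact Or.inr (R.trans h1 h2)
  constructor
  · intro h
    obtain ⟨hd, hgen⟩ := (hG.2.2 x y).1 h
    exact ⟨hd, reduce x y hgen⟩
  · rintro ⟨hx, h⟩
    rcases key x y h with rfl | h'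
    · exact R.refl x hx
    · exact h'

/-- Part 1: every treeable CBER is a free product of countably many finite subrelations. -/
theorem treeable_case {R : CBER X} [StandardBorelSpace X] (hR : R.Treeable) :
    ∃ (ι : Type) (_ : Countable ι) (Rf : ι → CBER X),
      (∀ i, (Rf i).IsSubrelOf R) ∧ (∀ i, (Rf i).FiniteClasses) ∧ IsFreeProduct R Rf := by
  obtain ⟨Φ, hT, hG⟩ := hR
  obtain ⟨f, hf⟩ := exists_measurableEmbedding_real X
  refine ⟨ℕ × ℕ, inferInstance, fun c => Rfc Φ hf c, fun c => rfc_subrel hf hG c,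
    fun c => rfc_finite Φ hf c, freely hf hT, dom_eq hf hT hG, gen_iff hf hT hG⟩

end FPAux

namespace FPAux

open Set

variable {X : Type} [MeasurableSpace X]

/-- The set of `g`-minimal points of the classes of a finite Borel equivalence relation is
Borel (by the Lusin–Novikov machinery). -/
theorem meas_fix [StandardBorelSpace X] {g : X → ℝ} (hg : MeasurableEmbedding g)
    (S : CBER X) (hfin : S.FiniteClasses) :
    MeasurableSet {x : X | ∀ y, S.rel x y → g x ≤ g y} := by
  have hemb : MeasurableEmbedding (Prod.map g g) := hg.prodMap hg
  set B : Set (ℝ × ℝ) := Prod.map g g '' {p : X × X | S.rel p.1 p.2} with hB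
  have hBm : MeasurableSet B := hemb.measurableSet_image.2 S.rel_meas
  set W : Set (ℝ × ℝ) := B ∩ {p : ℝ × ℝ | p.2 < p.1} with hWdef
  have hWm : MeasurableSet W := hBm.inter (measurableSet_lt measurable_snd measurable_fst)
  have hWfin : ∀ a : ℝ, {b | (a, b) ∈ W}.Finite := by
    intro a
    by_cases ha : ∃ x ∈ S.dom, g x = a
    · obtain ⟨x, hdom, hax⟩ := ha
      refine (((hfin x hdom).image g)).subset ?_
      rintro b ⟨hbB, -⟩
      obtain ⟨⟨u, v⟩, huv, heq⟩ := hbB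
      have h1 : g u = a := congrArg Prod.fst heq
      have h2 : g v = b := congrArg Prod.snd heq
      have hux : u = x := hg.injective (by rw [h1, hax])
      subst hux
      exact ⟨v, huv, h2⟩
    · convert Set.finite_empty
      rw [Set.eq_empty_iff_forall_notMem]
      rintro b ⟨hbB, -⟩
      obtain ⟨⟨u, v⟩, huv, heq⟩ := hbB
      exact ha ⟨u, (S.rel_dom huv).1, congrArg Prod.fst heq⟩
  have hproj : MeasurableSet (Prod.fst '' W) := FPNov.lnf hWm hWfin
  have hset : {x : X | ∀ y, S.rel x y → g x ≤ g y} = g ⁻¹' (Prod.fst '' W)ᶜ := by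
    ext x
    simp only [Set.mem_setOf_eq, Set.mem_preimage, Set.mem_compl_iff]
    constructor
    · intro h hx
      obtain ⟨p, ⟨hpB, hplt⟩, hpa⟩ := hx
      obtain ⟨⟨u, v⟩, huv, heq⟩ := hpB
      have h1 : g u = p.1 := congrArg Prod.fst heq
      have h2 : g v = p.2 := congrArg Prod.snd heq
      have hux : u = x := hg.injective (by rw [h1, hpa])
      subst hux
      have hle := h v huv
      rw [h2, h1] at hle
      exact absurd (show p.2 < p.1 from hplt) (not_lt.2 hle)
    · intro h y hy
      by_contra hlt
      push_neg at hlt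
      exact h ⟨(g x, g y), ⟨⟨(x, y), hy, rfl⟩, hlt⟩, rfl⟩
  rw [hset]
  exact hg.measurable hproj.compl

end FPAux

namespace FPAux

open Set

variable {X : Type} [MeasurableSpace X]

theorem hyperfinite_case {R : CBER X} [StandardBorelSpace X] (hR : R.Hyperfinite) :
    ∃ (ι : Type) (_ : Countable ι) (Rf : ι → CBER X),
      (∀ i, (Rf i).IsSubrelOf R) ∧ (∀ i, (Rf i).FiniteClasses) ∧ IsFreeProduct R Rf := by
  classical
  obtain ⟨S, hsub, hfin, hdom, hmono, hexh⟩ := hR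
  obtain ⟨g, hg⟩ := exists_measurableEmbedding_real X
  -- monotonicity of the filtration
  have hmono' : ∀ a b : ℕ, a ≤ b → ∀ x y : X, (S a).rel x y → (S b).rel x y := by
    intro a b hab
    induction b with
    | zero =>
      have : a = 0 := by omega
      subst this
      exact fun x y h => h
    | succ b ihb =>
      rcases Nat.lt_or_ge a (b + 1) with h' | h'
      · exact fun x y h => hmono b x y (ihb (by omega) x y h)
      · have : a = b + 1 := by omega
        subst this
        exact fun x y h => h
  -- the Borel sets of minimal points
  set Fix : ℕ → Set X := fun n => {x : X | ∀ y, (S n).rel x y → g x ≤ g y} with hFixdef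
  have hFixMeas : ∀ n, MeasurableSet (Fix n) := fun n => meas_fix hg (S n) (hfin n)
  have hfixrel : ∀ n (x y : X), x ∈ Fix n → y ∈ Fix n → (S n).rel x y → x = y := by
    intro n x y hx hy hxy
    exact hg.injective (le_antisymm (hx y hxy) (hy x ((S n).symm hxy)))
  -- the factors
  set Q : ℕ → CBER X := fun n =>
    Nat.casesOn n (S 0) (fun m => (S (m + 1)).restrict (Fix m) (hFixMeas m)) with hQdef
  have hQrel : ∀ n (x y : X), (Q n).rel x y → (S n).rel x y := by
    intro n x y
    cases n with
    | zero => exact fun h => h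
    | succ m => exact fun h => h.1
  have hQrel' : ∀ m (x y : X), (Q (m + 1)).rel x y →
      (S (m + 1)).rel x y ∧ x ∈ Fix m ∧ y ∈ Fix m := fun m x y h => h
  have hQsub : ∀ n, (Q n).IsSubrelOf R := by
    intro n
    cases n with
    | zero => exact hsub 0
    | succ m =>
      constructor
      · exact fun x hx => (hsub (m + 1)).1 hx.1
      · exact fun x y h => (hsub (m + 1)).2 x y h.1
  have hQfin : ∀ n, (Q n).FiniteClasses := by
    intro n
    cases n with
    | zero => exact hfin 0
    | succ m =>
      intro x hx
      refine ((hfin (m + 1)) x hx.1).subset ?_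
      intro y hy
      exact (hQrel (m + 1) x y hy)
  -- generation
  have hgen : ∀ n (x y : X), (S n).rel x y →
      Relation.EqvGen (fun a b => ∃ k, (Q k).rel a b) x y := by
    intro n
    induction n with
    | zero => exact fun x y h => Relation.EqvGen.rel x y ⟨0, h⟩
    | succ n ih =>
      intro x y h
      have hxdom : x ∈ (S n).dom := by
        rw [hdom n, ← hdom (n + 1)]
        exact ((S (n + 1)).rel_dom h).1
      have hydom : y ∈ (S n).dom := by
        rw [hdom n, ← hdom (n + 1)]
        exact ((S (n + 1)).rel_dom h).2
      obtain ⟨mx, hmx_mem, hmx_min⟩ := Set.exists_min_image ((S n).cls x) g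
        (hfin n x hxdom) ⟨x, (S n).refl x hxdom⟩
      obtain ⟨my, hmy_mem, hmy_min⟩ := Set.exists_min_image ((S n).cls y) g
        (hfin n y hydom) ⟨y, (S n).refl y hydom⟩
      have hmxFix : mx ∈ Fix n := fun z hz => hmx_min z ((S n).trans hmx_mem hz)
      have hmyFix : my ∈ Fix n := fun z hz => hmy_min z ((S n).trans hmy_mem hz)
      have hrel1 : (S (n + 1)).rel mx my := by
        have h1 : (S (n + 1)).rel mx x :=
          (S (n + 1)).symm (hmono' n (n + 1) (Nat.le_succ n) x mx hmx_mem)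
        have h2 : (S (n + 1)).rel y my := hmono' n (n + 1) (Nat.le_succ n) y my hmy_mem
        exact (S (n + 1)).trans h1 ((S (n + 1)).trans h h2)
      have hQmid : (Q (n + 1)).rel mx my := ⟨hrel1, hmxFix, hmyFix⟩
      exact Relation.EqvGen.trans x mx y (ih x mx hmx_mem)
        (Relation.EqvGen.trans mx my y (Relation.EqvGen.rel mx my ⟨n + 1, hQmid⟩)
          (Relation.EqvGen.symm y my (ih y my hmy_mem)))
  -- the walk lemma (free independence)
  have hwalk : ∀ M (m : ℕ) (x : ℕ → X) (i : ℕ → ℕ), 1 ≤ m → x m = x 0 →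
      (∀ j < m, x j ≠ x (j + 1)) → (∀ j < m, (Q (i j)).rel (x j) (x (j + 1))) →
      (∀ j, j + 1 < m → i j ≠ i (j + 1)) → (∀ j < m, i j ≤ M) → False := by
    intro M
    induction M with
    | zero =>
      intro m x i hm hxm hne hrel hcons hbnd
      rcases Nat.lt_or_ge 1 m with h2 | h2
      · refine hcons 0 (by omega) ?_
        have e0 := Nat.le_zero.1 (hbnd 0 (by omega))
        have e1 := Nat.le_zero.1 (hbnd 1 (by omega))
        rw [e0, e1]
      · have hm1 : m = 1 := by omega
        subst hm1
        exact hne 0 (by omega) (by rw [hxm])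
    | succ n ih =>
      intro m x i hm hxm hne hrel hcons hbnd
      -- chain within S n along small-index steps
      have hchain : ∀ a b : ℕ, a ≤ b → b ≤ m → (∀ j, a ≤ j → j < b → i j ≤ n) →
          x a = x b ∨ (S n).rel (x a) (x b) := by
        intro a b hab hbm hidx
        induction b with
        | zero =>
          have : a = 0 := by omega
          subst this
          exact Or.inl rfl
        | succ b ihb =>
          rcases Nat.lt_or_ge a (b + 1) with h' | h'
          · have hstep : (S n).rel (x b) (x (b + 1)) := by
              have h1 := hrel b (by omega)
              have h2 := hQrel (i b) _ _ h1
              exact hmono' (i b) n (hidx b (by omega) (by omega)) _ _ h2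
            rcases ihb (by omega) (by omega) (fun j hj1 hj2 => hidx j hj1 (by omega))
              with he | hr
            · rw [he]
              exact Or.inr hstep
            · exact Or.inr ((S n).trans hr hstep)
          · have : a = b + 1 := by omega
            subst this
            exact Or.inl rfl
      by_cases hMocc : ∃ j, j < m ∧ i j = n + 1
      · set j₁ := Nat.find hMocc with hj₁def
        obtain ⟨hj₁m, hj₁i⟩ := Nat.find_spec hMocc
        by_cases h2 : ∃ j, j₁ < j ∧ j < m ∧ i j = n + 1
        · set j₂ := Nat.find h2 with hj₂def
          obtain ⟨hj₂gt, hj₂m, hj₂i⟩ := Nat.find_spec h2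
          rcases Nat.lt_or_ge (j₁ + 1) j₂ with hlt | hge
          · -- nonempty inner segment with indices ≤ n
            have hidx : ∀ j, j₁ + 1 ≤ j → j < j₂ → i j ≤ n := by
              intro j hj1 hj2'
              have hjm : j < m := by omega
              have hb := hbnd j hjm
              rcases Nat.lt_or_ge (i j) (n + 1) with h' | h'
              · omega
              · have hij : i j = n + 1 := by omega
                exact absurd ⟨by omega, hjm, hij⟩ (Nat.find_min h2 (show j < j₂ from hj2'))
            have hseg := hchain (j₁ + 1) j₂ (by omega) (by omega) hidx
            have hfix1 : x (j₁ + 1) ∈ Fix n := by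
              have h1 := hrel j₁ hj₁m
              rw [hj₁i] at h1
              exact (hQrel' n _ _ h1).2.2
            have hfix2 : x j₂ ∈ Fix n := by
              have h1 := hrel j₂ hj₂m
              rw [hj₂i] at h1
              exact (hQrel' n _ _ h1).2.1
            have heq : x (j₁ + 1) = x j₂ := by
              rcases hseg with he | hr
              · exact he
              · exact hfixrel n _ _ hfix1 hfix2 hr
            refine ih (j₂ - (j₁ + 1)) (fun t => x (j₁ + 1 + t)) (fun t => i (j₁ + 1 + t))
              (by omega) ?_ ?_ ?_ ?_ ?_
            · show x (j₁ + 1 + (j₂ - (j₁ + 1))) = x (j₁ + 1 + 0)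
              rw [show j₁ + 1 + (j₂ - (j₁ + 1)) = j₂ by omega,
                show j₁ + 1 + 0 = j₁ + 1 by omega]
              exact heq.symm
            · intro j hj
              show x (j₁ + 1 + j) ≠ x (j₁ + 1 + (j + 1))
              rw [show j₁ + 1 + (j + 1) = (j₁ + 1 + j) + 1 by omega]
              exact hne (j₁ + 1 + j) (by omega)
            · intro j hj
              show (Q (i (j₁ + 1 + j))).rel (x (j₁ + 1 + j)) (x (j₁ + 1 + (j + 1)))
              rw [show j₁ + 1 + (j + 1) = (j₁ + 1 + j) + 1 by omega]
              exact hrel (j₁ + 1 + j) (by omega)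
            · intro j hj
              show i (j₁ + 1 + j) ≠ i (j₁ + 1 + (j + 1))
              rw [show j₁ + 1 + (j + 1) = (j₁ + 1 + j) + 1 by omega]
              exact hcons (j₁ + 1 + j) (by omega)
            · intro j hj
              exact hidx (j₁ + 1 + j) (by omega) (by omega)
          · -- two consecutive top-index steps
            have hj21 : j₂ = j₁ + 1 := by omega
            refine hcons j₁ (by omega) ?_
            rw [hj₁i, ← hj21, hj₂i]
        · -- a single top-index step: go around the cycle
          push_neg at h2
          have hidxA : ∀ j, j₁ + 1 ≤ j → j < m → i j ≤ n := by
            intro j h1 h2'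
            have hb := hbnd j h2'
            have hne' := h2 j (by omega) h2'
            omega
          have hidxB : ∀ j, 0 ≤ j → j < j₁ → i j ≤ n := by
            intro j _ hj
            have hb := hbnd j (by omega)
            rcases Nat.lt_or_ge (i j) (n + 1) with h' | h'
            · omega
            · exact absurd ⟨by omega, by omega⟩ (Nat.find_min hMocc hj)
          have hA := hchain (j₁ + 1) m (by omega) (le_refl m) hidxA
          have hB := hchain 0 j₁ (by omega) (by omega) hidxB
          have h1 := hrel j₁ hj₁m
          rw [hj₁i] at h1
          have hfix1 : x j₁ ∈ Fix n := (hQrel' n _ _ h1).2.1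
          have hfix2 : x (j₁ + 1) ∈ Fix n := (hQrel' n _ _ h1).2.2
          have hnestep : x j₁ ≠ x (j₁ + 1) := hne j₁ hj₁m
          have hcomb : x (j₁ + 1) = x j₁ ∨ (S n).rel (x (j₁ + 1)) (x j₁) := by
            rcases hA with he1 | hr1 <;> rcases hB with he2 | hr2
            · exact Or.inl (he1.trans (hxm.trans he2))
            · exact Or.inr (by rw [he1, hxm]; exact hr2)
            · exact Or.inr (by rw [← he2, ← hxm]; exact hr1)
            · refine Or.inr ((S n).trans ?_ hr2)
              rw [hxm] at hr1
              exact hr1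
          rcases hcomb with he | hr
          · exact hnestep he.symm
          · exact hnestep (hfixrel n _ _ hfix2 hfix1 hr).symm
      · push_neg at hMocc
        refine ih m x i hm hxm hne hrel hcons ?_
        intro j hj
        have hb := hbnd j hj
        have hne' := hMocc j hj
        omega
  -- assemble
  refine ⟨ℕ, inferInstance, Q, hQsub, hQfin, ?_, ?_, ?_⟩
  · -- free independence
    intro m x i hm hxm hne hrel
    by_contra hcon
    push_neg at hcon
    exact hwalk ((Finset.range m).sup i) m x i (by omega) hxm hne hrel hcon
      (fun j hj => Finset.le_sup (Finset.mem_range.2 hj))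
  · -- domains
    apply Set.Subset.antisymm
    · intro x hx
      refine Set.mem_iUnion.2 ⟨0, ?_⟩
      show x ∈ (S 0).dom
      rw [hdom 0]
      exact hx
    · refine Set.iUnion_subset fun k => ?_
      cases k with
      | zero =>
        intro x hx
        rw [← hdom 0]
        exact hx
      | succ n =>
        intro x hx
        rw [← hdom (n + 1)]
        exact hx.1
  · -- the generated relation
    have key : ∀ a b : X,
        Relation.EqvGen (fun a b => ∃ k, (Q k).rel a b) a b → a = b ∨ R.rel a b := by
      intro a b h
      induction h with
      | rel a b hab =>
        obtain ⟨k, hk⟩ := hab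
        exact Or.inr ((hQsub k).2 a b hk)
      | refl a => exact Or.inl rfl
      | symm a b _ ih' =>
        rcases ih' with rfl | h'
        · exact Or.inl rfl
        · exact Or.inr (R.symm h')
      | trans a b c _ _ ih1 ih2 =>
        rcases ih1 with rfl | h1
        · exact ih2
        · rcases ih2 with rfl | h2
          · exact Or.inr h1
          · exact Or.inr (R.trans h1 h2)
    intro x y
    constructor
    · intro h
      obtain ⟨n, hn⟩ := hexh x y h
      exact ⟨(R.rel_dom h).1, hgen n x y hn⟩
    · rintro ⟨hx, h⟩
      rcases key x y h with rfl | h'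
      · exact R.refl x hx
      · exact h'

end FPAux

/-- Every treeable countable Borel equivalence relation is a free product of an
at most countable family of finite Borel subrelations; in particular this holds for every
hyperfinite countable Borel equivalence relation. -/
theorem treeable_free_product_of_finite_subrelations :
    (∀ (X : Type) [MeasurableSpace X] [StandardBorelSpace X] (R : CBER X),
      R.Treeable →
        ∃ (ι : Type) (_ : Countable ι) (Rf : ι → CBER X),
          (∀ i, (Rf i).IsSubrelOf R) ∧ (∀ i, (Rf i).FiniteClasses) ∧
            IsFreeProduct R Rf) ∧
    (∀ (X : Type) [MeasurableSpace X] [StandardBorelSpace X] (R : CBER X),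
      R.Hyperfinite →
        ∃ (ι : Type) (_ : Countable ι) (Rf : ι → CBER X),
          (∀ i, (Rf i).IsSubrelOf R) ∧ (∀ i, (Rf i).FiniteClasses) ∧
            IsFreeProduct R Rf) := by
  constructor
  · intro X _ _ R hR
    exact FPAux.treeable_case hR
  · intro X _ _ R hR
    exact FPAux.hyperfinite_case hR
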